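/- Let τ be a nonempty index set and φ : τ → τ a self-map. Then the generalized shift σ_φ maps ℓ²(τ) into ℓ²(τ) if and only if there exists N ≥ 1 such that for every β ∈ τ the fiber φ⁻¹(β) has at most N elements. -/

import Mathlib

open Function Set
open scoped ENNReal NNReal

lemma aux_norm_sq (z : ℂ) : ‖z‖ ^ (2 : ℝ≥0∞).toReal = ((‖z‖₊ ^ 2 : ℝ≥0) : ℝ) := by
  have h2 : (2 : ℝ≥0∞).toReal = ((2 : ℕ) : ℝ) := by simp
  rw [h2, Real.rpow_natCast]
  push_cast
  rfl

lemma aux_summable_iff {ι : Type*} (f : ι → ℂ) :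
    Summable (fun i => ‖f i‖ ^ (2 : ℝ≥0∞).toReal) ↔
      (∑' i, ((‖f i‖₊ : ℝ≥0∞)) ^ 2) ≠ ⊤ := by
  have h1 : ∀ i, ‖f i‖ ^ (2 : ℝ≥0∞).toReal = ((‖f i‖₊ ^ 2 : ℝ≥0) : ℝ) := fun i => aux_norm_sq _
  rw [show (fun i => ‖f i‖ ^ (2 : ℝ≥0∞).toReal) = fun i => ((‖f i‖₊ ^ 2 : ℝ≥0) : ℝ) from
    funext h1]
  rw [NNReal.summable_coe]
  rw [← ENNReal.tsum_coe_ne_top_iff_summable]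
  simp [ENNReal.coe_pow]

/-- The generalized shift `σ_φ` maps `ℓ²(τ)` into `ℓ²(τ)` if and only if
there exists `N ≥ 1` such that every fiber `φ⁻¹(β)` has at most `N` elements. -/
theorem generalized_shift_maps_l2_iff {τ : Type*} [Nonempty τ] (φ : τ → τ) :
    (∀ x : τ → ℂ, Memℓp x 2 → Memℓp (fun α => x (φ α)) 2) ↔
      ∃ N : ℕ, 1 ≤ N ∧ ∀ β : τ, (φ ⁻¹' {β}).encard ≤ N := by
  have hp2 : (0 : ℝ) < (2 : ℝ≥0∞).toReal := by norm_num
  constructor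
  · intro h
    classical
    by_contra hcon
    push_neg at hcon
    have key : ∀ n : ℕ, ∃ β : τ, (n : ℕ∞) < (φ ⁻¹' {β}).encard := by
      intro n
      obtain ⟨β, hβ⟩ := hcon (n + 1) (Nat.le_add_left 1 n)
      exact ⟨β, lt_of_le_of_lt (by exact_mod_cast Nat.le_succ n :
        (n : ℕ∞) ≤ ((n + 1 : ℕ) : ℕ∞)) hβ⟩
    by_cases hinf : ∃ β, (φ ⁻¹' {β}).Infinite
    · -- some fiber is infinite
      obtain ⟨β₀, hβ₀⟩ := hinf
      set x : τ → ℂ := fun β => if β = β₀ then 1 else 0 with hxdef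
      have hx : Memℓp x 2 := by
        apply memℓp_gen
        apply summable_of_ne_finset_zero (s := ({β₀} : Finset τ))
        intro b hb
        simp only [Finset.mem_singleton] at hb
        simp [hxdef, hb, Real.zero_rpow (ne_of_gt hp2)]
      have hy := (h x hx).summable hp2
      have h0 := hy.tendsto_cofinite_zero
      have hev : ∀ᶠ α in Filter.cofinite,
          ‖x (φ α)‖ ^ (2 : ℝ≥0∞).toReal < 1 :=
        h0.eventually_lt_const (by norm_num)
      rw [Filter.eventually_cofinite] at hev
      have hsub : φ ⁻¹' {β₀} ⊆ {α | ¬‖x (φ α)‖ ^ (2 : ℝ≥0∞).toReal < 1} := by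
        intro α hα
        simp only [mem_preimage, mem_singleton_iff] at hα
        simp only [mem_setOf_eq, not_lt, hxdef, hα, if_pos rfl]
        simp
      exact (hβ₀.mono hsub) hev
    · -- all fibers finite but unbounded
      push_neg at hinf
      have hfin : ∀ β, (φ ⁻¹' {β}).Finite := fun β => hinf β
      set m : τ → ℕ := fun β => (φ ⁻¹' {β}).ncard with hmdef
      have key2 : ∀ n : ℕ, ∃ β, n < m β := by
        intro n
        obtain ⟨β, hβ⟩ := key n
        refine ⟨β, ?_⟩
        rw [← (hfin β).cast_ncard_eq] at hβ
        exact_mod_cast hβ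
      -- build a sequence of fibers of growing size
      let g : ℕ → τ := fun k =>
        Nat.rec (Classical.choose (key2 0))
          (fun k ih => Classical.choose (key2 (max (m ih) (2 ^ (k + 1))))) k
      have hg0 : 0 < m (g 0) := Classical.choose_spec (key2 0)
      have hgs : ∀ k, max (m (g k)) (2 ^ (k + 1)) < m (g (k + 1)) := fun k =>
        Classical.choose_spec (key2 (max (m (g k)) (2 ^ (k + 1))))
      have hmono : StrictMono (fun k => m (g k)) := by
        apply strictMono_nat_of_lt_succ
        intro k
        exact lt_of_le_of_lt (le_max_left _ _) (hgs k)
      have hginj : Function.Injective g := by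
        intro a b hab
        exact hmono.injective (congrArg m hab)
      have hpow : ∀ k, 2 ^ k ≤ m (g k) := by
        intro k
        cases k with
        | zero => simpa using Nat.succ_le_of_lt hg0
        | succ k => exact le_of_lt (lt_of_le_of_lt (le_max_right _ _) (hgs k))
      set w : ℕ → ℂ := fun k => (((Real.sqrt 2)⁻¹ ^ k : ℝ) : ℂ) with hwdef
      have hwnorm : ∀ k, ‖w k‖ ^ (2 : ℝ≥0∞).toReal = (2 : ℝ)⁻¹ ^ k := by
        intro k
        have hs : (0 : ℝ) ≤ (Real.sqrt 2)⁻¹ ^ k := by positivity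
        have h2 : (2 : ℝ≥0∞).toReal = ((2 : ℕ) : ℝ) := by simp
        rw [hwdef]
        simp only [Complex.norm_real, Real.norm_eq_abs, abs_of_nonneg hs, h2,
          Real.rpow_natCast]
        rw [← pow_mul, mul_comm k 2, pow_mul]
        congr 1
        rw [inv_pow, Real.sq_sqrt (by norm_num)]
      set x : τ → ℂ := Function.extend g w 0 with hxdef
      have hxg : ∀ k, x (g k) = w k := fun k => hginj.extend_apply w 0 k
      have hx0 : ∀ β, β ∉ Set.range g → x β = 0 := by
        intro β hβ
        rw [hxdef, Function.extend_apply' w (0 : τ → ℂ) β (by simpa [Set.range] using hβ)]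
        rfl
      have hx : Memℓp x 2 := by
        apply memℓp_gen
        have heq : (fun β => ‖x β‖ ^ (2 : ℝ≥0∞).toReal)
            = Function.extend g (fun k => ‖w k‖ ^ (2 : ℝ≥0∞).toReal) 0 := by
          funext β
          by_cases hβ : β ∈ Set.range g
          · obtain ⟨k, rfl⟩ := hβ
            rw [hxg, hginj.extend_apply]
          · rw [hx0 β hβ, Function.extend_apply' _ (0 : τ → ℝ) β (by simpa [Set.range] using hβ)]
            simp [Real.zero_rpow (ne_of_gt hp2)]
        rw [heq, summable_extend_zero hginj]
        have : (fun k => ‖w k‖ ^ (2 : ℝ≥0∞).toReal) = fun k => (2 : ℝ)⁻¹ ^ k :=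
          funext hwnorm
        rw [this]
        exact summable_geometric_of_lt_one (by norm_num) (by norm_num)
      have hy := (h x hx).summable hp2
      set f : τ → ℝ := fun α => ‖x (φ α)‖ ^ (2 : ℝ≥0∞).toReal with hfdef
      have hfnn : ∀ α, 0 ≤ f α := fun α => Real.rpow_nonneg (norm_nonneg _) _
      -- for each K, a finite set with sum ≥ K
      have hbound : ∀ K : ℕ, (K : ℝ) ≤ ∑' α, f α := by
        intro K
        set s : ℕ → Finset τ := fun k => (hfin (g k)).toFinset with hsdef
        have hscard : ∀ k, (s k).card = m (g k) := by
          intro k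
          rw [hsdef, hmdef]
          simp only
          rw [ncard_eq_toFinset_card _ (hfin (g k))]
        have hsmem : ∀ k α, α ∈ s k → φ α = g k := by
          intro k α hα
          rw [hsdef, Set.Finite.mem_toFinset] at hα
          exact hα
        have hssum : ∀ k, ∑ α ∈ s k, f α = (m (g k) : ℝ) * (2 : ℝ)⁻¹ ^ k := by
          intro k
          have : ∀ α ∈ s k, f α = (2 : ℝ)⁻¹ ^ k := by
            intro α hα
            rw [hfdef]
            simp only
            rw [hsmem k α hα, hxg, hwnorm]
          rw [Finset.sum_congr rfl this, Finset.sum_const, hscard, nsmul_eq_mul]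
        have hdisj : ∀ k j, k ≠ j → Disjoint (s k) (s j) := by
          intro k j hkj
          rw [Finset.disjoint_left]
          intro α hαk hαj
          exact hkj (hginj ((hsmem k α hαk).symm.trans (hsmem j α hαj)))
        have hsum_bi : (K : ℝ) ≤ ∑ α ∈ (Finset.range K).biUnion s, f α := by
          rw [Finset.sum_biUnion (fun k _ j _ hkj => hdisj k j hkj)]
          calc (K : ℝ) = ∑ _k ∈ Finset.range K, (1 : ℝ) := by simp
            _ ≤ ∑ k ∈ Finset.range K, ∑ α ∈ s k, f α := by
                apply Finset.sum_le_sum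
                intro k _
                rw [hssum k]
                calc (1 : ℝ) = (2 : ℝ) ^ k * (2 : ℝ)⁻¹ ^ k := by
                      rw [← mul_pow]; norm_num
                  _ ≤ (m (g k) : ℝ) * (2 : ℝ)⁻¹ ^ k := by
                      apply mul_le_mul_of_nonneg_right _ (by positivity)
                      exact_mod_cast hpow k
        exact hsum_bi.trans (Summable.sum_le_tsum _ (fun α _ => hfnn α) hy)
      obtain ⟨K, hK⟩ := exists_nat_gt (∑' α, f α)
      exact absurd (hbound K) (not_le.mpr hK)
  · rintro ⟨N, hN1, hN⟩ x hx
    have hfin : ∀ β, (φ ⁻¹' {β}).Finite := by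
      intro β
      rw [← Set.encard_lt_top_iff]
      exact lt_of_le_of_lt (hN β) (by exact_mod_cast WithTop.coe_lt_top (N : ℕ))
    apply memℓp_gen
    rw [aux_summable_iff]
    have hxsum : (∑' β, ((‖x β‖₊ : ℝ≥0∞)) ^ 2) ≠ ⊤ :=
      (aux_summable_iff x).mp (hx.summable hp2)
    set G : τ → ℝ≥0∞ := fun β => ((‖x β‖₊ : ℝ≥0∞)) ^ 2 with hGdef
    have hfiber : ∀ β, (∑' a : (φ ⁻¹' {β} : Set τ), G (φ a)) ≤ (N : ℝ≥0∞) * G β := by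
      intro β
      have : ∀ a : (φ ⁻¹' {β} : Set τ), G (φ a) = G β := by
        rintro ⟨a, ha⟩
        simp only [mem_preimage, mem_singleton_iff] at ha
        simp [ha]
      rw [tsum_congr this]
      haveI : Fintype (φ ⁻¹' {β} : Set τ) := (hfin β).fintype
      rw [tsum_fintype]
      rw [Finset.sum_const, nsmul_eq_mul, Finset.card_univ]
      apply mul_le_mul_left
      have hcard : Fintype.card (φ ⁻¹' {β} : Set τ) ≤ N := by
        have h1 : (((φ ⁻¹' {β}).ncard : ℕ) : ℕ∞) ≤ (N : ℕ∞) := by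
          rw [(hfin β).cast_ncard_eq]; exact hN β
        have h2 : (φ ⁻¹' {β}).ncard = Fintype.card (φ ⁻¹' {β} : Set τ) := by
          rw [ncard_eq_toFinset_card', Set.toFinset_card]
        rw [h2] at h1
        exact_mod_cast h1
      exact_mod_cast hcard
    have hle : (∑' α, G (φ α)) ≤ (N : ℝ≥0∞) * ∑' β, G β :=
      calc (∑' α, G (φ α)) = ∑' β, ∑' a : (φ ⁻¹' {β} : Set τ), G (φ a) :=
            (ENNReal.tsum_fiberwise (fun α => G (φ α)) φ).symm
        _ ≤ ∑' β, (N : ℝ≥0∞) * G β := ENNReal.tsum_le_tsum hfiber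
        _ = (N : ℝ≥0∞) * ∑' β, G β := ENNReal.tsum_mul_left
    exact ne_top_of_le_ne_top (ENNReal.mul_ne_top (by simp) hxsum) hle
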